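/- arXiv:1110.3718 — 3 statements merged into one kernel-verified Lean document; each statement's English description precedes it below -/
import Mathlib

section
/- Let X be a finite CW-complex (or finite simplicial complex) and let ρ : U × π₁(X,x₀) → GL(n,C) be a family of representations depending continuously on a parameter u ∈ U, where U is a topological space. For each fixed degree m, the function F : U → ℤ given by F(u) = dim_C H_m(X; ρ_u) (homology with local coefficients in ρ_u) is upper semicontinuous: limsup_{u→u₀} F(u) ≤ F(u₀) for every u₀ ∈ U. -/
open Matrix

/-- Given a representation `ρ : G → GL(N, ℂ)` and a matrix `D` over the integral group ring
`ℤ[G]` (a boundary matrix of the chain complex of the universal cover of a finite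
CW-complex), `blockMatrix ρ D` is the complex block matrix obtained by applying `ρ`
entrywise; it is the matrix of the induced boundary map of the chain complex
`V ⊗_{ℂ[G]} C_*(X̃; ℤ)` computing homology with local coefficients. -/
noncomputable def blockMatrix {G : Type} [Group G] {N a b : ℕ}
    (ρ : G →* GL (Fin N) ℂ) (D : Matrix (Fin a) (Fin b) (MonoidAlgebra ℤ G)) :
    Matrix (Fin a × Fin N) (Fin b × Fin N) ℂ :=
  fun p q => (D p.1 q.1).coeff.sum fun g z =>
    (z : ℂ) * ((ρ g : Matrix (Fin N) (Fin N) ℂ) p.2 q.2)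

/-- Entrywise continuity of the block matrix in the parameter. -/
theorem continuous_blockMatrix_entry {U : Type} [TopologicalSpace U]
    {G : Type} [Group G] {N a b : ℕ}
    (ρ : U → G →* GL (Fin N) ℂ)
    (hρ : ∀ g : G, Continuous fun u => ((ρ u g : GL (Fin N) ℂ) : Matrix (Fin N) (Fin N) ℂ))
    (D : Matrix (Fin a) (Fin b) (MonoidAlgebra ℤ G))
    (p : Fin a × Fin N) (q : Fin b × Fin N) :
    Continuous fun u => blockMatrix (ρ u) D p q := by
  unfold blockMatrix
  unfold Finsupp.sum
  apply continuous_finset_sum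
  intro g _
  exact continuous_const.mul
    ((continuous_apply q.2).comp ((continuous_apply p.2).comp (hρ g)))

/-- Lower semicontinuity of the rank of a continuously varying complex matrix family. -/
theorem eventually_rank_le {U : Type} [TopologicalSpace U] {a b : Type}
    [Fintype a] [Fintype b]
    (A : U → Matrix a b ℂ)
    (hA : ∀ p q, Continuous fun u => A u p q) (u₀ : U) :
    ∀ᶠ u in nhds u₀, (A u₀).rank ≤ (A u).rank := by
  -- choose a linearly independent set of columns spanning the column space at `u₀`
  obtain ⟨s, hsub, hspan, hli⟩ :=
    exists_linearIndependent ℂ (Set.range (A u₀)ᵀ)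
  have hsfin : s.Finite := (Set.finite_range (A u₀)ᵀ).subset hsub
  haveI : Fintype s := hsfin.fintype
  -- pick column indices realizing the vectors in `s`
  have hchoice : ∀ v : s, ∃ j : b, (A u₀)ᵀ j = (v : a → ℂ) := by
    intro v; exact hsub v.2
  choose j hj using hchoice
  -- the family of chosen columns, as a function of the parameter
  set F : U → s → (a → ℂ) := fun u v => (A u)ᵀ (j v) with hF
  have hFcont : Continuous F := by
    apply continuous_pi; intro v
    apply continuous_pi; intro i
    exact hA i (j v)
  have hFu₀ : LinearIndependent ℂ (F u₀) := by
    have : F u₀ = fun v : s => (v : a → ℂ) := by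
      funext v; exact hj v
    rw [this]
    exact hli
  -- linear independence is an open condition
  have hopen : IsOpen { f : s → (a → ℂ) | LinearIndependent ℂ f } :=
    isOpen_setOf_linearIndependent
  have hev : ∀ᶠ u in nhds u₀, LinearIndependent ℂ (F u) :=
    hFcont.continuousAt.eventually_mem (hopen.mem_nhds hFu₀)
  filter_upwards [hev] with u hu
  -- rank at u₀ equals the cardinality of s
  have h₀ : (A u₀).rank = s.toFinset.card := by
    rw [Matrix.rank_eq_finrank_span_cols, show (A u₀).col = (A u₀)ᵀ from rfl, ← hspan]
    rw [finrank_span_set_eq_card hli]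
  -- rank at u is at least the cardinality of s
  have h₁ : s.toFinset.card ≤ (A u).rank := by
    rw [Matrix.rank_eq_finrank_span_cols]
    have hle : Submodule.span ℂ (Set.range (F u)) ≤
        Submodule.span ℂ (Set.range (A u)ᵀ) := by
      apply Submodule.span_mono
      rintro _ ⟨v, rfl⟩
      exact ⟨j v, rfl⟩
    have hcard : s.toFinset.card = Fintype.card s := Set.toFinset_card s
    calc s.toFinset.card = Fintype.card s := hcard
      _ = Module.finrank ℂ (Submodule.span ℂ (Set.range (F u))) :=
          (finrank_span_eq_card hu).symm
      _ ≤ Module.finrank ℂ (Submodule.span ℂ (Set.range (A u)ᵀ)) :=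
          Submodule.finrank_mono hle
  omega

/-- Upper semicontinuity of the dimension of homology with local coefficients.  A finite
CW-complex `X` with fundamental group `G` determines a chain complex of finitely generated
free `ℤ[G]`-modules (the cellular chain complex of the universal cover), with boundary
matrices `D₁ = ∂_m` (from degree `m` to `m−1`) and `D₂ = ∂_{m+1}` over `ℤ[G]` satisfying
`D₁ D₂ = 0`.  For a family of representations `ρ_u : G → GL(N, ℂ)` depending continuously on
`u ∈ U`, the function
`F(u) = dim_ℂ H_m(X; ρ_u) = dim ker(∂_m ⊗ ρ_u) − rank(∂_{m+1} ⊗ ρ_u)`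
is upper semicontinuous. -/
theorem homology_dim_upperSemicontinuous
    {U : Type} [TopologicalSpace U] {G : Type} [Group G] {N : ℕ}
    (ρ : U → G →* GL (Fin N) ℂ)
    (hρ : ∀ g : G, Continuous fun u => ((ρ u g : GL (Fin N) ℂ) : Matrix (Fin N) (Fin N) ℂ))
    {r₀ r₁ r₂ : ℕ}
    (D₁ : Matrix (Fin r₀) (Fin r₁) (MonoidAlgebra ℤ G))
    (D₂ : Matrix (Fin r₁) (Fin r₂) (MonoidAlgebra ℤ G))
    (hDD : D₁ * D₂ = 0) :
    UpperSemicontinuous fun u =>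
      (r₁ * N - (blockMatrix (ρ u) D₁).rank) - (blockMatrix (ρ u) D₂).rank := by
  intro u₀ y hy
  have h₁ := eventually_rank_le (fun u => blockMatrix (ρ u) D₁)
    (fun p q => continuous_blockMatrix_entry ρ hρ D₁ p q) u₀
  have h₂ := eventually_rank_le (fun u => blockMatrix (ρ u) D₂)
    (fun p q => continuous_blockMatrix_entry ρ hρ D₂ p q) u₀
  filter_upwards [h₁, h₂] with u hu₁ hu₂
  simp only at hu₁ hu₂ hy ⊢
  omega
end

section
/- Let δ > 0 and let μ be a positive Radon measure supported in {z ∈ C : |z| ≥ e^{δ/2}} satisfying μ({|z| ≤ R}) ≤ C R⁴ for all large R. Then the double series ∑_{k=5}^{∞} ∫ |log|1 − z^{-k}|| dμ(z) converges. -/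
open MeasureTheory
open scoped ENNReal

lemma abs_log_norm_le {w : ℂ} (hw : ‖w‖ < 1) :
    |Real.log ‖1 - w‖| ≤ ‖w‖ / (1 - ‖w‖) := by
  have h0 : (0:ℝ) ≤ ‖w‖ := norm_nonneg _
  have h1 : 0 < 1 - ‖w‖ := by linarith
  have hl : 1 - ‖w‖ ≤ ‖1 - w‖ := by
    have := norm_sub_norm_le (1:ℂ) w
    simpa using this
  have hu : ‖1 - w‖ ≤ 1 + ‖w‖ := by
    have := norm_sub_le (1:ℂ) w
    simpa using this
  have key : -Real.log (1 - ‖w‖) ≤ ‖w‖ / (1 - ‖w‖) := by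
    rw [← Real.log_inv]
    have := Real.log_le_sub_one_of_pos (x := (1 - ‖w‖)⁻¹) (by positivity)
    have heq : (1 - ‖w‖)⁻¹ - 1 = ‖w‖ / (1 - ‖w‖) := by
      rw [eq_div_iff h1.ne', sub_mul, inv_mul_cancel₀ h1.ne']; ring
    linarith [heq ▸ this]
  rw [abs_le]
  constructor
  · have : Real.log (1 - ‖w‖) ≤ Real.log ‖1 - w‖ := Real.log_le_log h1 hl
    linarith
  · have h3 : Real.log ‖1 - w‖ ≤ Real.log (1 + ‖w‖) := Real.log_le_log (by linarith) hu
    have h4 : Real.log (1 + ‖w‖) ≤ ‖w‖ := by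
      have := Real.log_le_sub_one_of_pos (x := 1 + ‖w‖) (by linarith)
      linarith
    have h5 : Real.log (1 - ‖w‖) ≤ -‖w‖ := by
      have := Real.log_le_sub_one_of_pos h1
      linarith
    linarith

/-- Let `δ > 0` and let `μ` be a positive Radon measure supported in `{|z| ≥ e^{δ/2}}`
with `μ({|z| ≤ R}) ≤ C R⁴` for all large `R`.  Then the double series
`∑_{k=5}^∞ ∫ | log|1 − z^{-k}| | dμ(z)` converges. -/
theorem log_series_convergent (δ C R₀ : ℝ) (hδ : 0 < δ) (hC : 0 < C)
    (μ : Measure ℂ) (hμ : IsLocallyFiniteMeasure μ)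
    (hsupp : μ {z : ℂ | ‖z‖ < Real.exp (δ / 2)} = 0)
    (hgrowth : ∀ R : ℝ, R₀ ≤ R → μ {z : ℂ | ‖z‖ ≤ R} ≤ ENNReal.ofReal (C * R ^ 4)) :
    (∑' k : ℕ, ∫⁻ z, ENNReal.ofReal |Real.log ‖1 - (z ^ (k + 5))⁻¹‖| ∂μ) < ⊤ := by
  set r₀ : ℝ := Real.exp (δ / 2) with hr₀def
  have hr₀1 : 1 < r₀ := by
    have h := Real.exp_lt_exp.mpr (show (0:ℝ) < δ / 2 by linarith)
    rwa [Real.exp_zero] at h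
  have hr₀0 : 0 < r₀ := by linarith
  set q : ℝ := r₀⁻¹ with hqdef
  have hq0 : 0 < q := by positivity
  have hq1 : q < 1 := by
    rw [hqdef]
    exact inv_lt_one_of_one_lt₀ hr₀1
  have hq5 : q ^ 5 < 1 := pow_lt_one₀ hq0.le hq1 (by norm_num)
  have h1q5 : 0 < 1 - q ^ 5 := by linarith
  set A : ℝ := (1 - q ^ 5)⁻¹ with hAdef
  have hA0 : 0 < A := inv_pos.mpr h1q5
  set U : Set ℂ := {z | r₀ ≤ ‖z‖} with hUdef
  have hUc : μ Uᶜ = 0 := by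
    have : Uᶜ = {z : ℂ | ‖z‖ < r₀} := by ext z; simp [hUdef, not_le]
    rw [this]; exact hsupp
  have haeU : ∀ᵐ z ∂μ, z ∈ U := by
    rw [ae_iff]; exact hUc
  -- pointwise bound
  have hpt : ∀ (k : ℕ), ∀ z ∈ U, |Real.log ‖1 - (z ^ (k + 5))⁻¹‖| ≤ A * ‖z‖⁻¹ ^ 5 * q ^ k := by
    intro k z hz
    have hz1 : 1 < ‖z‖ := lt_of_lt_of_le hr₀1 hz
    have hz0 : 0 < ‖z‖ := by linarith
    have hinv : ‖z‖⁻¹ ≤ q := by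
      rw [hqdef]; exact inv_anti₀ hr₀0 hz
    have hinv0 : (0:ℝ) ≤ ‖z‖⁻¹ := by positivity
    set w : ℂ := (z ^ (k + 5))⁻¹ with hwdef
    have hnorm : ‖w‖ = ‖z‖⁻¹ ^ (k + 5) := by
      rw [hwdef, norm_inv, norm_pow, inv_pow]
    have hw5 : ‖w‖ ≤ q ^ 5 := by
      rw [hnorm]
      calc ‖z‖⁻¹ ^ (k + 5) ≤ q ^ (k + 5) := pow_le_pow_left₀ hinv0 hinv _
        _ ≤ q ^ 5 := pow_le_pow_of_le_one hq0.le hq1.le (by omega)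
    have hwk : ‖w‖ ≤ ‖z‖⁻¹ ^ 5 * q ^ k := by
      rw [hnorm]
      have : ‖z‖⁻¹ ^ (k + 5) = ‖z‖⁻¹ ^ 5 * ‖z‖⁻¹ ^ k := by ring
      rw [this]
      exact mul_le_mul_of_nonneg_left (pow_le_pow_left₀ hinv0 hinv k) (by positivity)
    have hw1 : ‖w‖ < 1 := lt_of_le_of_lt hw5 hq5
    have hinvle : (1 - ‖w‖)⁻¹ ≤ A := by
      rw [hAdef]
      exact inv_anti₀ h1q5 (by linarith)
    calc |Real.log ‖1 - w‖| ≤ ‖w‖ / (1 - ‖w‖) := abs_log_norm_le hw1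
      _ = ‖w‖ * (1 - ‖w‖)⁻¹ := div_eq_mul_inv _ _
      _ ≤ (‖z‖⁻¹ ^ 5 * q ^ k) * A :=
          mul_le_mul hwk hinvle (le_of_lt (inv_pos.mpr (by linarith))) (by positivity)
      _ = A * ‖z‖⁻¹ ^ 5 * q ^ k := by ring
  set f : ℂ → ℝ≥0∞ := fun z => Set.indicator U (fun z => ENNReal.ofReal (A * ‖z‖⁻¹ ^ 5)) z with hfdef
  set J : ℝ≥0∞ := ∫⁻ z, f z ∂μ with hJdef
  -- each term bounded
  have hIk : ∀ k : ℕ, (∫⁻ z, ENNReal.ofReal |Real.log ‖1 - (z ^ (k + 5))⁻¹‖| ∂μ)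
      ≤ ENNReal.ofReal (q ^ k) * J := by
    intro k
    have step1 : (∫⁻ z, ENNReal.ofReal |Real.log ‖1 - (z ^ (k + 5))⁻¹‖| ∂μ)
        = ∫⁻ z, Set.indicator U (fun z => ENNReal.ofReal |Real.log ‖1 - (z ^ (k + 5))⁻¹‖|) z ∂μ := by
      apply lintegral_congr_ae
      filter_upwards [haeU] with z hz
      rw [Set.indicator_of_mem hz]
    rw [step1, hJdef, ← lintegral_const_mul' _ _ (by simp : ENNReal.ofReal (q ^ k) ≠ ⊤)]
    apply lintegral_mono
    intro z
    by_cases hz : z ∈ U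
    · rw [Set.indicator_of_mem hz, hfdef]
      simp only [Set.indicator_of_mem hz]
      calc ENNReal.ofReal |Real.log ‖1 - (z ^ (k + 5))⁻¹‖|
          ≤ ENNReal.ofReal (A * ‖z‖⁻¹ ^ 5 * q ^ k) := ENNReal.ofReal_le_ofReal (hpt k z hz)
        _ = ENNReal.ofReal (q ^ k) * ENNReal.ofReal (A * ‖z‖⁻¹ ^ 5) := by
            rw [show A * ‖z‖⁻¹ ^ 5 * q ^ k = q ^ k * (A * ‖z‖⁻¹ ^ 5) by ring,
              ENNReal.ofReal_mul (by positivity)]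
    · rw [Set.indicator_of_notMem hz, hfdef]
      simp [Set.indicator_of_notMem hz]
  -- J is finite
  have hJfin : J < ⊤ := by
    set R₁ : ℝ := max (max R₀ r₀) 1 with hR₁def
    have hR₁1 : (1:ℝ) ≤ R₁ := le_max_right _ _
    have hR₁0 : (0:ℝ) < R₁ := by linarith
    have hR₁R₀ : R₀ ≤ R₁ := le_trans (le_max_left _ _) (le_max_left _ _)
    have hR₁r₀ : r₀ ≤ R₁ := le_trans (le_max_right _ _) (le_max_left _ _)
    classical
    set c : ℕ → ℝ := fun n => if n = 0 then (-1) else R₁ * 2 ^ (n - 1) with hcdef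
    have hc0 : c 0 = -1 := by simp [hcdef]
    have hcsucc : ∀ n : ℕ, c (n + 1) = R₁ * 2 ^ n := by intro n; simp [hcdef]
    have hcmono : Monotone c := by
      apply monotone_nat_of_le_succ
      intro n
      cases n with
      | zero => rw [hc0, hcsucc]; nlinarith
      | succ m =>
        rw [hcsucc, hcsucc]
        have : (2:ℝ) ^ m ≤ 2 ^ (m + 1) := by
          have := pow_le_pow_right₀ (show (1:ℝ) ≤ 2 by norm_num) (show m ≤ m + 1 by omega)
          exact this
        nlinarith
    set B : ℕ → Set ℂ := fun n => {z | ‖z‖ ∈ Set.Ioc (c n) (c (n + 1))} with hBdef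
    have hBm : ∀ n, MeasurableSet (B n) := fun n => measurable_norm measurableSet_Ioc
    have hBdisj : Pairwise (Function.onFun Disjoint B) := by
      intro m n hmn
      rw [Function.onFun, Set.disjoint_left]
      intro z hz1 hz2
      rcases hmn.lt_or_gt with h | h
      · have h1 : ‖z‖ ≤ c (m + 1) := hz1.2
        have h2 : c n < ‖z‖ := hz2.1
        have : c (m + 1) ≤ c n := hcmono h
        linarith
      · have h1 : ‖z‖ ≤ c (n + 1) := hz2.2
        have h2 : c m < ‖z‖ := hz1.1
        have : c (n + 1) ≤ c m := hcmono h
        linarith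
    have hBunion : (⋃ n, B n) = Set.univ := by
      ext z
      simp only [Set.mem_iUnion, Set.mem_univ, iff_true]
      obtain ⟨N, hN⟩ := pow_unbounded_of_one_lt (‖z‖) (one_lt_two (α := ℝ))
      have hzN : ‖z‖ ≤ c (N + 1) := by
        rw [hcsucc]
        have : (2:ℝ) ^ N ≤ R₁ * 2 ^ N := le_mul_of_one_le_left (by positivity) hR₁1
        linarith
      have hP : ∃ n, ‖z‖ ≤ c (n + 1) := ⟨N, hzN⟩
      refine ⟨Nat.find hP, ?_, Nat.find_spec hP⟩
      rcases Nat.eq_zero_or_pos (Nat.find hP) with h | h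
      · rw [h, hc0]
        have := norm_nonneg z
        linarith
      · obtain ⟨m, hm⟩ := Nat.exists_eq_succ_of_ne_zero h.ne'
        have h2 := Nat.find_min hP (m := m) (by omega)
        push_neg at h2
        rw [hm]
        exact h2
    set K : ℝ := max (A * q ^ 5 * (C * R₁ ^ 4)) (32 * A * C / R₁) with hKdef
    have hmeasB : ∀ n : ℕ, μ (B n) ≤ ENNReal.ofReal (C * (R₁ * 2 ^ n) ^ 4) := by
      intro n
      have hsub : B n ⊆ {z : ℂ | ‖z‖ ≤ R₁ * 2 ^ n} := by
        intro z hz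
        have := hz.2
        rw [hcsucc] at this
        exact this
      refine le_trans (measure_mono hsub) (hgrowth _ ?_)
      have h1 : (1:ℝ) ≤ 2 ^ n := one_le_pow₀ (by norm_num : (1:ℝ) ≤ 2)
      nlinarith
    have hterm : ∀ n : ℕ, (∫⁻ z in B n, f z ∂μ)
        ≤ ENNReal.ofReal K * (ENNReal.ofReal 2⁻¹) ^ n := by
      intro n
      cases n with
      | zero =>
        have hb : ∀ z ∈ B 0, f z ≤ ENNReal.ofReal (A * q ^ 5) := by
          intro z _
          rw [hfdef]
          by_cases hzU : z ∈ U
          · simp only [Set.indicator_of_mem hzU]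
            apply ENNReal.ofReal_le_ofReal
            have h1 : ‖z‖⁻¹ ≤ q := by rw [hqdef]; exact inv_anti₀ hr₀0 hzU
            have h2 : ‖z‖⁻¹ ^ 5 ≤ q ^ 5 := pow_le_pow_left₀ (by positivity) h1 5
            nlinarith
          · simp [Set.indicator_of_notMem hzU]
        calc (∫⁻ z in B 0, f z ∂μ) ≤ ∫⁻ _ in B 0, ENNReal.ofReal (A * q ^ 5) ∂μ :=
              setLIntegral_mono measurable_const hb
          _ = ENNReal.ofReal (A * q ^ 5) * μ (B 0) := setLIntegral_const _ _
          _ ≤ ENNReal.ofReal (A * q ^ 5) * ENNReal.ofReal (C * (R₁ * 2 ^ 0) ^ 4) :=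
              mul_le_mul_right (hmeasB 0) _
          _ = ENNReal.ofReal (A * q ^ 5 * (C * R₁ ^ 4)) := by
              rw [← ENNReal.ofReal_mul (by positivity)]; norm_num
          _ ≤ ENNReal.ofReal K * (ENNReal.ofReal 2⁻¹) ^ 0 := by
              rw [pow_zero, mul_one]
              exact ENNReal.ofReal_le_ofReal (le_max_left _ _)
      | succ m =>
        have hcm : (0:ℝ) < R₁ * 2 ^ m := by positivity
        have hb : ∀ z ∈ B (m + 1), f z ≤ ENNReal.ofReal (A * ((R₁ * 2 ^ m)⁻¹) ^ 5) := by
          intro z hz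
          rw [hfdef]
          by_cases hzU : z ∈ U
          · simp only [Set.indicator_of_mem hzU]
            apply ENNReal.ofReal_le_ofReal
            have h1 : R₁ * 2 ^ m < ‖z‖ := by
              have := hz.1
              rwa [hcsucc] at this
            have h2 : ‖z‖⁻¹ ≤ (R₁ * 2 ^ m)⁻¹ := inv_anti₀ hcm h1.le
            have h3 : ‖z‖⁻¹ ^ 5 ≤ ((R₁ * 2 ^ m)⁻¹) ^ 5 :=
              pow_le_pow_left₀ (by positivity) h2 5
            nlinarith
          · simp [Set.indicator_of_notMem hzU]
        have hkey : A * ((R₁ * 2 ^ m)⁻¹) ^ 5 * (C * (R₁ * 2 ^ (m + 1)) ^ 4)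
            ≤ K * (2⁻¹) ^ (m + 1) := by
          have heq : A * ((R₁ * 2 ^ m)⁻¹) ^ 5 * (C * (R₁ * 2 ^ (m + 1)) ^ 4)
              = (32 * A * C / R₁) * (2⁻¹) ^ (m + 1) := by
            rw [pow_succ, pow_succ]
            field_simp
            ring_nf
            rw [one_div, inv_pow]
            field_simp
            ring
          rw [heq]
          exact mul_le_mul_of_nonneg_right (le_max_right _ _) (by positivity)
        calc (∫⁻ z in B (m + 1), f z ∂μ)
            ≤ ∫⁻ _ in B (m + 1), ENNReal.ofReal (A * ((R₁ * 2 ^ m)⁻¹) ^ 5) ∂μ :=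
              setLIntegral_mono measurable_const hb
          _ = ENNReal.ofReal (A * ((R₁ * 2 ^ m)⁻¹) ^ 5) * μ (B (m + 1)) := setLIntegral_const _ _
          _ ≤ ENNReal.ofReal (A * ((R₁ * 2 ^ m)⁻¹) ^ 5)
              * ENNReal.ofReal (C * (R₁ * 2 ^ (m + 1)) ^ 4) := mul_le_mul_right (hmeasB (m + 1)) _
          _ = ENNReal.ofReal (A * ((R₁ * 2 ^ m)⁻¹) ^ 5 * (C * (R₁ * 2 ^ (m + 1)) ^ 4)) := by
              rw [← ENNReal.ofReal_mul (by positivity)]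
          _ ≤ ENNReal.ofReal (K * (2⁻¹) ^ (m + 1)) := ENNReal.ofReal_le_ofReal hkey
          _ = ENNReal.ofReal K * (ENNReal.ofReal 2⁻¹) ^ (m + 1) := by
              rw [ENNReal.ofReal_mul (le_trans (by positivity) (le_max_left _ _)),
                ENNReal.ofReal_pow (by norm_num)]
    have hJeq : J = ∑' n : ℕ, ∫⁻ z in B n, f z ∂μ := by
      rw [hJdef, ← setLIntegral_univ, ← hBunion, lintegral_iUnion hBm hBdisj]
    rw [hJeq]
    calc (∑' n : ℕ, ∫⁻ z in B n, f z ∂μ)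
        ≤ ∑' n : ℕ, ENNReal.ofReal K * (ENNReal.ofReal 2⁻¹) ^ n := ENNReal.tsum_le_tsum hterm
      _ = ENNReal.ofReal K * (1 - ENNReal.ofReal 2⁻¹)⁻¹ := by
          rw [ENNReal.tsum_mul_left, ENNReal.tsum_geometric]
      _ < ⊤ := by
          apply ENNReal.mul_lt_top ENNReal.ofReal_lt_top
          rw [lt_top_iff_ne_top, Ne, ENNReal.inv_eq_top, tsub_eq_zero_iff_le]
          intro h
          exact absurd (ENNReal.one_le_ofReal.mp h) (by norm_num)
  -- combine
  have hsum : (∑' k : ℕ, ∫⁻ z, ENNReal.ofReal |Real.log ‖1 - (z ^ (k + 5))⁻¹‖| ∂μ)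
      ≤ (1 - ENNReal.ofReal q)⁻¹ * J := by
    calc (∑' k : ℕ, ∫⁻ z, ENNReal.ofReal |Real.log ‖1 - (z ^ (k + 5))⁻¹‖| ∂μ)
        ≤ ∑' k : ℕ, ENNReal.ofReal (q ^ k) * J := ENNReal.tsum_le_tsum hIk
      _ = (∑' k : ℕ, (ENNReal.ofReal q) ^ k) * J := by
          rw [← ENNReal.tsum_mul_right]
          exact tsum_congr fun k => by rw [ENNReal.ofReal_pow hq0.le]
      _ = (1 - ENNReal.ofReal q)⁻¹ * J := by rw [ENNReal.tsum_geometric]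
  refine lt_of_le_of_lt hsum (ENNReal.mul_lt_top ?_ hJfin)
  rw [lt_top_iff_ne_top, Ne, ENNReal.inv_eq_top, tsub_eq_zero_iff_le]
  intro h
  exact absurd (ENNReal.one_le_ofReal.mp h) (not_le.mpr hq1)
end

section
/- Let ψ be holomorphic on the open unit disk D with ψ(0) = 0 and ψ'(0) = 1. Then for every integer N ≥ 1, the linear span of the functions {ψ(z^k)/z^N : k ≥ N} is dense in the space H(D) of all holomorphic functions on D with the topology of uniform convergence on compact sets. -/
open Metric Set Function


private lemma iterDslope_diff {F : ℂ → ℂ} (hF : DifferentiableOn ℂ F (ball (0:ℂ) 1)) (n : ℕ) :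
    DifferentiableOn ℂ ((Function.swap dslope 0)^[n] F) (ball (0:ℂ) 1) := by
  induction n with
  | zero => exact hF
  | succ n ih =>
    rw [Function.iterate_succ_apply']
    exact (Complex.differentiableOn_dslope (isOpen_ball.mem_nhds (by simp))).mpr ih

private lemma iterDslope_expand (F : ℂ → ℂ) (n : ℕ) (z : ℂ) :
    F z = (∑ j ∈ Finset.range n, ((Function.swap dslope 0)^[j] F) 0 * z ^ j)
      + z ^ n * ((Function.swap dslope 0)^[n] F) z := by
  induction n with
  | zero => simp
  | succ n ih =>
    rw [Finset.sum_range_succ, Function.iterate_succ_apply']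
    have h := sub_smul_dslope ((Function.swap dslope 0)^[n] F) 0 z
    simp only [sub_zero, smul_eq_mul] at h
    simp only [Function.swap]
    linear_combination ih + z ^ n * h.symm

private lemma coeff_bound {F : ℂ → ℂ} {R A : ℝ} (hR : 0 < R)
    (hF : DifferentiableOn ℂ F (closedBall (0:ℂ) R))
    (hA : ∀ z ∈ sphere (0:ℂ) R, ‖F z‖ ≤ A) (n : ℕ) :
    ‖((Function.swap dslope 0)^[n] F) 0‖ ≤ A / R ^ n := by
  have hco : (R.toNNReal : ℝ) = R := Real.coe_toNNReal _ hR.le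
  have hFb : DifferentiableOn ℂ F (closedBall (0:ℂ) (R.toNNReal : ℝ)) := by
    rw [hco]; exact hF
  have hball := hFb.hasFPowerSeriesOnBall (Real.toNNReal_pos.mpr hR)
  have hat := hball.hasFPowerSeriesAt
  have h1 := HasFPowerSeriesAt.has_fpower_series_iterate_dslope_fslope n hat
  have h2 : ((Function.swap dslope 0)^[n] F) 0
      = (cauchyPowerSeries F 0 (R.toNNReal : ℝ)).coeff n := by
    have hcz := h1.coeff_zero (fun _ => (1:ℂ))
    have hit : (FormalMultilinearSeries.fslope^[n] (cauchyPowerSeries F 0 (R.toNNReal:ℝ))).coeff 0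
        = (cauchyPowerSeries F 0 (R.toNNReal:ℝ)).coeff (0 + n) :=
      FormalMultilinearSeries.coeff_iterate_fslope n 0
    simp only [zero_add] at hit
    rw [← hit, ← hcz]
    rfl
  rw [h2]
  have h3 : ‖(cauchyPowerSeries F 0 (R.toNNReal : ℝ)).coeff n‖
      ≤ ‖cauchyPowerSeries F 0 (R.toNNReal : ℝ) n‖ := by
    have := (cauchyPowerSeries F 0 (R.toNNReal : ℝ) n).le_opNorm (fun _ => (1:ℂ))
    simpa using this
  have h4 := norm_cauchyPowerSeries_le F 0 (R.toNNReal : ℝ) n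
  rw [hco] at h3 h4 ⊢
  -- bound the integral
  have hcont : Continuous fun θ : ℝ => ‖F (circleMap 0 R θ)‖ := by
    apply Continuous.norm
    apply hF.continuousOn.comp_continuous (continuous_circleMap 0 R)
    intro θ
    simpa using circleMap_mem_closedBall (0:ℂ) hR.le θ
  have hint : (∫ θ : ℝ in (0)..2 * Real.pi, ‖F (circleMap 0 R θ)‖) ≤ 2 * Real.pi * A := by
    have : (∫ θ : ℝ in (0)..2 * Real.pi, ‖F (circleMap 0 R θ)‖)
        ≤ ∫ _ : ℝ in (0)..2 * Real.pi, A := by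
      apply intervalIntegral.integral_mono_on Real.two_pi_pos.le
        (hcont.intervalIntegrable _ _) (intervalIntegrable_const)
      intro θ _
      exact hA _ (circleMap_mem_sphere (0:ℂ) hR.le θ)
    simpa [mul_comm] using this
  have hAnn : 0 ≤ A := le_trans (norm_nonneg (F (R:ℂ)))
    (hA R (mem_sphere_zero_iff_norm.mpr (by rw [Complex.norm_real]; exact abs_of_pos hR)))

  calc ‖(cauchyPowerSeries F 0 R).coeff n‖ ≤ ‖cauchyPowerSeries F 0 R n‖ := h3
    _ ≤ ((2 * Real.pi)⁻¹ * ∫ θ : ℝ in (0)..2 * Real.pi, ‖F (circleMap 0 R θ)‖) * |R|⁻¹ ^ n := h4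
    _ ≤ ((2 * Real.pi)⁻¹ * (2 * Real.pi * A)) * |R|⁻¹ ^ n := by
        apply mul_le_mul_of_nonneg_right
        · exact mul_le_mul_of_nonneg_left hint (by positivity)
        · positivity
    _ = A / R ^ n := by
        have h5 : (2*Real.pi)⁻¹ * (2*Real.pi*A) = A := by field_simp
        rw [abs_of_pos hR, h5, inv_pow, div_eq_mul_inv]


private lemma iterDslope_factor {F u : ℂ → ℂ} (hu : DifferentiableOn ℂ u (ball (0:ℂ) 1))
    (p : ℕ) (hrep : ∀ z ∈ ball (0:ℂ) 1, F z = z ^ p * u z) :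
    ∀ j, j ≤ p → ∀ z ∈ ball (0:ℂ) 1,
      ((Function.swap dslope 0)^[j] F) z = z ^ (p - j) * u z := by
  intro j
  induction j with
  | zero => intro _ z hz; simpa using hrep z hz
  | succ j ih =>
    intro hj z hz
    have hjp : j ≤ p := Nat.le_of_succ_le hj
    have ihz := ih hjp
    rw [Function.iterate_succ_apply']
    rw [show Function.swap dslope 0 ((Function.swap dslope 0)^[j] F)
        = dslope ((Function.swap dslope 0)^[j] F) 0 from rfl]
    have hq : 1 ≤ p - j := by omega
    by_cases h0 : z = 0
    · subst h0
      rw [dslope_same]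
      have hev : ((Function.swap dslope 0)^[j] F) =ᶠ[nhds (0:ℂ)]
          fun w => w ^ (p - j) * u w := by
        filter_upwards [isOpen_ball.mem_nhds (show (0:ℂ) ∈ ball (0:ℂ) 1 by simp)] with w hw
        exact ihz w hw
      rw [hev.deriv_eq]
      have hd : HasDerivAt (fun w : ℂ => w ^ (p - j) * u w)
          (↑(p - j) * 0 ^ (p - j - 1) * u 0 + 0 ^ (p - j) * deriv u 0) 0 := by
        have h1 := hasDerivAt_pow (p - j) (0:ℂ)
        have h2 : HasDerivAt u (deriv u 0) 0 :=
          ((hu 0 (by simp)).differentiableAt (isOpen_ball.mem_nhds (by simp))).hasDerivAt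
        exact h1.mul h2
      rw [hd.deriv]
      have hpj : p - (j+1) = p - j - 1 := by omega
      rw [hpj]
      rcases eq_or_lt_of_le hq with h1 | h2
      · rw [← h1]
        norm_num
      · rw [zero_pow (by omega : p - j ≠ 0), zero_pow (by omega : p - j - 1 ≠ 0)]
        ring
    · rw [dslope_of_ne _ h0, slope_def_field]
      rw [ihz z hz, ihz 0 (by simp), zero_pow (by omega : p - j ≠ 0)]
      have hpj : p - j = (p - (j+1)) + 1 := by omega
      rw [hpj, pow_succ]
      field_simp
      ring

private lemma factor_bound {G u : ℂ → ℂ} {p : ℕ} {R A : ℝ} (hR : 0 < R) (hR1 : R < 1)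
    (hu : DifferentiableOn ℂ u (ball (0:ℂ) 1))
    (hrep : ∀ z ∈ ball (0:ℂ) 1, G z = z ^ p * u z)
    (hA : ∀ z ∈ closedBall (0:ℂ) R, ‖G z‖ ≤ A) :
    ∀ z ∈ closedBall (0:ℂ) R, ‖u z‖ ≤ A / R ^ p := by
  have hcl : closure (ball (0:ℂ) R) = closedBall (0:ℂ) R := closure_ball _ hR.ne'
  have hsub : closedBall (0:ℂ) R ⊆ ball (0:ℂ) 1 := closedBall_subset_ball hR1
  intro z hz
  refine Complex.norm_le_of_forall_mem_frontier_norm_le (U := ball (0:ℂ) R) isBounded_ball ?_ ?_ ?_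
  · exact DifferentiableOn.diffContOnCl (by rw [hcl]; exact hu.mono hsub)
  · intro w hw
    rw [frontier_ball _ hR.ne'] at hw
    have hwr : ‖w‖ = R := mem_sphere_zero_iff_norm.mp hw
    have hmem : w ∈ closedBall (0:ℂ) R := sphere_subset_closedBall hw
    have h2 : ‖G w‖ = R ^ p * ‖u w‖ := by
      rw [hrep w (hsub hmem), norm_mul, norm_pow, hwr]
    have h3 := hA w hmem
    rw [h2] at h3
    rw [le_div_iff₀ (by positivity)]
    nlinarith [pow_pos hR p]
  · rw [hcl]; exact hz


private lemma step_lemma {ψ σ : ℂ → ℂ} {ρ Mσ : ℝ} (hρ0 : 0 < ρ) (hρ1 : ρ < 1)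
    (hψd : DifferentiableOn ℂ ψ (ball (0:ℂ) 1))
    (hσd : DifferentiableOn ℂ σ (ball (0:ℂ) 1))
    (hσid : ∀ w : ℂ, ψ w = w + w ^ 2 * σ w)
    (hMσ : ∀ z ∈ closedBall (0:ℂ) ρ, ‖σ z‖ ≤ Mσ)
    {G u : ℂ → ℂ} {p : ℕ} {A : ℝ} (hp : 1 ≤ p)
    (hG : DifferentiableOn ℂ G (ball (0:ℂ) 1))
    (hu : DifferentiableOn ℂ u (ball (0:ℂ) 1))
    (hrep : ∀ z ∈ ball (0:ℂ) 1, G z = z ^ p * u z)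
    (hA : ∀ z ∈ closedBall (0:ℂ) ρ, ‖G z‖ ≤ A) :
    ∃ (c : ℕ → ℂ) (G' u' : ℂ → ℂ),
      DifferentiableOn ℂ G' (ball (0:ℂ) 1) ∧
      DifferentiableOn ℂ u' (ball (0:ℂ) 1) ∧
      (∀ z ∈ ball (0:ℂ) 1, G' z = z ^ (2 * p) * u' z) ∧
      (∀ z ∈ ball (0:ℂ) 1, G' z = G z - ∑ m ∈ Finset.Icc p (2 * p), c m * ψ (z ^ m)) ∧
      (∀ z ∈ closedBall (0:ℂ) ρ, ‖G' z‖ ≤ (1 + (2 * ↑p + 1) * (1 + Mσ)) * A) := by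
  set γ : ℕ → ℂ := fun m => ((Function.swap dslope 0)^[m] G) 0 with hγdef
  set iter : ℂ → ℂ := (Function.swap dslope 0)^[2 * p + 1] G with hiterdef
  refine ⟨γ, fun z => G z - ∑ m ∈ Finset.Icc p (2 * p), γ m * ψ (z ^ m),
    fun z => z * iter z - ∑ m ∈ Finset.Icc p (2 * p), γ m * (z ^ (2 * (m - p)) * σ (z ^ m)),
    ?_, ?_, ?_, fun z _ => rfl, ?_⟩
  case _ =>
    apply hG.sub
    apply DifferentiableOn.fun_sum
    intro m hm
    have hm1 : 1 ≤ m := le_trans hp (Finset.mem_Icc.mp hm).1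
    apply DifferentiableOn.const_mul
    apply hψd.comp ((differentiable_pow m).differentiableOn)
    intro z hz
    rw [mem_ball_zero_iff] at hz ⊢
    rw [norm_pow]
    exact pow_lt_one₀ (norm_nonneg z) hz (by omega)
  case _ =>
    apply DifferentiableOn.sub
    · exact (differentiable_id.differentiableOn).mul (iterDslope_diff hG _)
    · apply DifferentiableOn.fun_sum
      intro m hm
      have hm1 : 1 ≤ m := le_trans hp (Finset.mem_Icc.mp hm).1
      apply DifferentiableOn.const_mul
      apply DifferentiableOn.mul ((differentiable_pow _).differentiableOn)
      apply hσd.comp ((differentiable_pow m).differentiableOn)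
      intro z hz
      rw [mem_ball_zero_iff] at hz ⊢
      rw [norm_pow]
      exact pow_lt_one₀ (norm_nonneg z) hz (by omega)
  case _ =>
    -- factorization
    intro z hz
    show G z - ∑ m ∈ Finset.Icc p (2 * p), γ m * ψ (z ^ m)
        = z ^ (2 * p) * (z * iter z - ∑ m ∈ Finset.Icc p (2 * p), γ m * (z ^ (2 * (m - p)) * σ (z ^ m)))
    have hγ0 : ∀ j, j < p → γ j = 0 := by
      intro j hj
      have := iterDslope_factor hu p hrep j hj.le 0 (by simp)
      rw [hγdef]
      simp only []
      rw [this, zero_pow (by omega : p - j ≠ 0), zero_mul]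
    have hkey : G z - ∑ m ∈ Finset.Icc p (2 * p), γ m * z ^ m
        = z ^ (2 * p + 1) * iter z := by
      have hexp := iterDslope_expand G (2 * p + 1) z
      have hsum : ∑ m ∈ Finset.Icc p (2 * p), γ m * z ^ m
          = ∑ j ∈ Finset.range (2 * p + 1), γ j * z ^ j := by
        apply Finset.sum_subset
        · intro x hx
          rw [Finset.mem_Icc] at hx
          rw [Finset.mem_range]
          omega
        · intro x hx hnx
          rw [Finset.mem_range] at hx
          rw [Finset.mem_Icc] at hnx
          rw [hγ0 x (by omega), zero_mul]
      rw [hsum]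
      linear_combination hexp
    have e1 : ∀ m ∈ Finset.Icc p (2 * p), γ m * ψ (z ^ m)
        = γ m * z ^ m + z ^ (2 * p) * (γ m * (z ^ (2 * (m - p)) * σ (z ^ m))) := by
      intro m hm
      obtain ⟨h1m, h2m⟩ := Finset.mem_Icc.mp hm
      have hexp : (z ^ m) ^ 2 = z ^ (2 * p) * z ^ (2 * (m - p)) := by
        rw [← pow_mul, ← pow_add]
        congr 1
        omega
      calc γ m * ψ (z ^ m) = γ m * (z ^ m + (z ^ m) ^ 2 * σ (z ^ m)) := by rw [← hσid]
        _ = γ m * z ^ m + z ^ (2 * p) * (γ m * (z ^ (2 * (m - p)) * σ (z ^ m))) := by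
            rw [hexp]; ring
    rw [Finset.sum_congr rfl e1, Finset.sum_add_distrib, ← Finset.mul_sum]
    linear_combination hkey
  case _ =>
    -- norm bound
    intro z hz
    show ‖G z - ∑ m ∈ Finset.Icc p (2 * p), γ m * ψ (z ^ m)‖ ≤ (1 + (2 * (p:ℝ) + 1) * (1 + Mσ)) * A
    have hzρ : ‖z‖ ≤ ρ := mem_closedBall_zero_iff.mp hz
    have hA0 : 0 ≤ A := le_trans (norm_nonneg _) (hA 0 (by simp [hρ0.le]))
    have hMσ0 : 0 ≤ Mσ := le_trans (norm_nonneg _) (hMσ 0 (by simp [hρ0.le]))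
    have hγb : ∀ m, ‖γ m‖ ≤ A / ρ ^ m := fun m =>
      coeff_bound hρ0 (hG.mono (closedBall_subset_ball hρ1))
        (fun w hw => hA w (sphere_subset_closedBall hw)) m
    have hterm : ∀ m ∈ Finset.Icc p (2 * p), ‖γ m * ψ (z ^ m)‖ ≤ A * (1 + Mσ) := by
      intro m hm
      have hm1 : 1 ≤ m := le_trans hp (Finset.mem_Icc.mp hm).1
      have h1 : ‖z ^ m‖ ≤ ρ ^ m := by
        rw [norm_pow]; exact pow_le_pow_left₀ (norm_nonneg z) hzρ m
      have hρm1 : ρ ^ m ≤ 1 := pow_le_one₀ hρ0.le hρ1.le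
      have hmem : z ^ m ∈ closedBall (0:ℂ) ρ := by
        rw [mem_closedBall_zero_iff]
        refine h1.trans ?_
        calc ρ ^ m ≤ ρ ^ 1 := pow_le_pow_of_le_one hρ0.le hρ1.le hm1
          _ = ρ := pow_one ρ
      have h2 : ‖σ (z ^ m)‖ ≤ Mσ := hMσ _ hmem
      have hρm : (ρ:ℝ) ^ m ≠ 0 := (pow_pos hρ0 m).ne'
      have hstep : ‖(z ^ m) ^ 2 * σ (z ^ m)‖ = ‖z ^ m‖ ^ 2 * ‖σ (z ^ m)‖ := by
        rw [norm_mul, norm_pow]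
      have e2 : ‖z ^ m‖ ^ 2 * ‖σ (z ^ m)‖ ≤ ρ ^ m * Mσ := by
        have b1 : ‖z ^ m‖ ^ 2 ≤ (ρ ^ m) ^ 2 := pow_le_pow_left₀ (norm_nonneg _) h1 2
        have b2 : (ρ ^ m) ^ 2 ≤ ρ ^ m := by nlinarith [pow_pos hρ0 m]
        exact mul_le_mul (b1.trans b2) h2 (norm_nonneg _) (pow_nonneg hρ0.le m)
      have hψb : ‖ψ (z ^ m)‖ ≤ ρ ^ m * (1 + Mσ) := by
        rw [hσid (z ^ m)]
        refine ((norm_add_le _ _).trans ?_)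
        rw [hstep]
        nlinarith [e2, h1]
      rw [norm_mul]
      have := mul_le_mul (hγb m) hψb (norm_nonneg _) (by positivity : (0:ℝ) ≤ A / ρ ^ m)
      refine this.trans (le_of_eq ?_)
      field_simp
    calc ‖G z - ∑ m ∈ Finset.Icc p (2 * p), γ m * ψ (z ^ m)‖
        ≤ ‖G z‖ + ‖∑ m ∈ Finset.Icc p (2 * p), γ m * ψ (z ^ m)‖ := norm_sub_le _ _
      _ ≤ A + ∑ m ∈ Finset.Icc p (2 * p), ‖γ m * ψ (z ^ m)‖ := by
          gcongr
          · exact hA z hz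
          · exact norm_sum_le _ _
      _ ≤ A + ∑ m ∈ Finset.Icc p (2 * p), A * (1 + Mσ) := by
          gcongr
          exact hterm _ ‹_›
      _ = A + (p + 1 : ℕ) * (A * (1 + Mσ)) := by
          rw [Finset.sum_const, Nat.card_Icc, nsmul_eq_mul]
          have hc : 2 * p + 1 - p = p + 1 := by omega
          rw [hc]
      _ ≤ (1 + (2 * (p:ℝ) + 1) * (1 + Mσ)) * A := by
          push_cast
          have key : (0:ℝ) ≤ (p:ℝ) * (A * (1 + Mσ)) := by positivity
          nlinarith [key]



private noncomputable def boundSeq (Mσ A0 : ℝ) (N : ℕ) : ℕ → ℝ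
  | 0 => A0
  | n + 1 => (1 + (2 * ((2 ^ n * N : ℕ) : ℝ) + 1) * (1 + Mσ)) * boundSeq Mσ A0 N n

private lemma iterate_lemma {ψ σ : ℂ → ℂ} {ρ Mσ : ℝ} (hρ0 : 0 < ρ) (hρ1 : ρ < 1)
    (hψd : DifferentiableOn ℂ ψ (ball (0:ℂ) 1))
    (hσd : DifferentiableOn ℂ σ (ball (0:ℂ) 1))
    (hσid : ∀ w : ℂ, ψ w = w + w ^ 2 * σ w)
    (hMσ : ∀ z ∈ closedBall (0:ℂ) ρ, ‖σ z‖ ≤ Mσ)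
    {G0 u0 : ℂ → ℂ} {N : ℕ} (hN : 1 ≤ N) {A0 : ℝ}
    (hG0 : DifferentiableOn ℂ G0 (ball (0:ℂ) 1))
    (hu0 : DifferentiableOn ℂ u0 (ball (0:ℂ) 1))
    (hrep0 : ∀ z ∈ ball (0:ℂ) 1, G0 z = z ^ N * u0 z)
    (hA0 : ∀ z ∈ closedBall (0:ℂ) ρ, ‖G0 z‖ ≤ A0) :
    ∀ n : ℕ, ∃ (c : ℕ → ℂ) (G u : ℂ → ℂ),
      DifferentiableOn ℂ G (ball (0:ℂ) 1) ∧
      DifferentiableOn ℂ u (ball (0:ℂ) 1) ∧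
      (∀ z ∈ ball (0:ℂ) 1, G z = z ^ (2 ^ n * N) * u z) ∧
      (∀ z ∈ ball (0:ℂ) 1, G z = G0 z - ∑ m ∈ Finset.Icc N (2 ^ n * N), c m * ψ (z ^ m)) ∧
      (∀ z ∈ closedBall (0:ℂ) ρ, ‖G z‖ ≤ boundSeq Mσ A0 N n) := by
  intro n
  induction n with
  | zero =>
    refine ⟨fun _ => 0, G0, u0, hG0, hu0, ?_, ?_, ?_⟩
    · simpa using hrep0
    · intro z hz; simp
    · simpa [boundSeq] using hA0
  | succ n ih =>
    obtain ⟨c, G, u, hG, hu, hrep, hform, hA⟩ := ih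
    have hp : 1 ≤ 2 ^ n * N := Nat.mul_pos (pow_pos (by norm_num) n) hN
    obtain ⟨γ, G', u', hG', hu', hrep', hform', hA'⟩ :=
      step_lemma hρ0 hρ1 hψd hσd hσid hMσ hp hG hu hrep hA
    have hexp : 2 * (2 ^ n * N) = 2 ^ (n + 1) * N := by ring
    have hsub1 : Finset.Icc N (2 ^ n * N) ⊆ Finset.Icc N (2 ^ (n + 1) * N) := by
      apply Finset.Icc_subset_Icc le_rfl
      have : 2 ^ n ≤ 2 ^ (n + 1) := Nat.pow_le_pow_right (by norm_num) (Nat.le_succ n)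
      exact Nat.mul_le_mul_right N this
    have hsub2 : Finset.Icc (2 ^ n * N) (2 * (2 ^ n * N)) ⊆ Finset.Icc N (2 ^ (n + 1) * N) := by
      apply Finset.Icc_subset_Icc
      · exact le_trans (Nat.le_mul_of_pos_left N (pow_pos (by norm_num) n)) le_rfl
      · omega
    refine ⟨fun m => (if m ∈ Finset.Icc N (2 ^ n * N) then c m else 0)
        + (if m ∈ Finset.Icc (2 ^ n * N) (2 * (2 ^ n * N)) then γ m else 0),
      G', u', hG', hu', ?_, ?_, ?_⟩
    · intro z hz
      rw [hrep' z hz, ← hexp]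
    · intro z hz
      have key : (∑ m ∈ Finset.Icc N (2 ^ (n + 1) * N),
            ((if m ∈ Finset.Icc N (2 ^ n * N) then c m else 0)
              + (if m ∈ Finset.Icc (2 ^ n * N) (2 * (2 ^ n * N)) then γ m else 0)) * ψ (z ^ m))
          = (∑ m ∈ Finset.Icc N (2 ^ n * N), c m * ψ (z ^ m))
            + ∑ m ∈ Finset.Icc (2 ^ n * N) (2 * (2 ^ n * N)), γ m * ψ (z ^ m) := by
        have e : ∀ m ∈ Finset.Icc N (2 ^ (n + 1) * N),
            ((if m ∈ Finset.Icc N (2 ^ n * N) then c m else 0)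
              + (if m ∈ Finset.Icc (2 ^ n * N) (2 * (2 ^ n * N)) then γ m else 0)) * ψ (z ^ m)
            = (if m ∈ Finset.Icc N (2 ^ n * N) then c m * ψ (z ^ m) else 0)
              + (if m ∈ Finset.Icc (2 ^ n * N) (2 * (2 ^ n * N)) then γ m * ψ (z ^ m) else 0) :=
          fun m _ => by split_ifs <;> ring
        rw [Finset.sum_congr rfl e, Finset.sum_add_distrib]
        congr 1
        · rw [Finset.sum_ite_mem, Finset.inter_eq_right.mpr hsub1]
        · rw [Finset.sum_ite_mem, Finset.inter_eq_right.mpr hsub2]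
      rw [hform' z hz, hform z hz, key]
      ring
    · intro z hz
      have := hA' z hz
      refine this.trans (le_of_eq ?_)
      rw [boundSeq]

private lemma exists_good_n (Mσ A0 : ℝ) (hMσ0 : 0 ≤ Mσ) (hA00 : 0 ≤ A0) {N : ℕ} (hN : 1 ≤ N)
    {θ : ℝ} (hθ0 : 0 ≤ θ) (hθ1 : θ < 1) {ε : ℝ} (hε : 0 < ε) :
    ∃ n : ℕ, boundSeq Mσ A0 N n * θ ^ (2 ^ n * N) < ε := by
  set f : ℕ → ℝ := fun k => (1 + (2 * (k : ℝ) + 1) * (1 + Mσ)) * θ ^ k with hf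
  set R : ℕ → ℝ := fun n => boundSeq Mσ A0 N n * θ ^ (2 ^ n * N) with hR
  have hbnn : ∀ n, 0 ≤ boundSeq Mσ A0 N n := by
    intro n
    induction n with
    | zero => exact hA00
    | succ n ih =>
      rw [boundSeq]
      have : (0:ℝ) ≤ 1 + (2 * ((2 ^ n * N : ℕ) : ℝ) + 1) * (1 + Mσ) := by positivity
      exact mul_nonneg this ih
  have hRnn : ∀ n, 0 ≤ R n := fun n => mul_nonneg (hbnn n) (pow_nonneg hθ0 _)
  have hRrec : ∀ n, R (n + 1) = f (2 ^ n * N) * R n := by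
    intro n
    rw [hR]
    simp only []
    rw [boundSeq, hf]
    simp only []
    have he : 2 ^ (n + 1) * N = 2 ^ n * N + 2 ^ n * N := by ring
    rw [he, pow_add]
    ring
  -- f tends to zero
  have hf0 : Filter.Tendsto f Filter.atTop (nhds 0) := by
    have h1 : Filter.Tendsto (fun k : ℕ => θ ^ k) Filter.atTop (nhds 0) :=
      tendsto_pow_atTop_nhds_zero_of_lt_one hθ0 hθ1
    have h2 : Filter.Tendsto (fun k : ℕ => (k : ℝ) * θ ^ k) Filter.atTop (nhds 0) := by
      have hs := summable_pow_mul_geometric_of_norm_lt_one (R := ℝ) 1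
        (by rwa [Real.norm_eq_abs, abs_of_nonneg hθ0] : ‖θ‖ < 1)
      have := hs.tendsto_atTop_zero
      simpa using this
    have : Filter.Tendsto (fun k : ℕ => θ ^ k + (2 * ((k:ℝ) * θ ^ k) + θ ^ k) * (1 + Mσ))
        Filter.atTop (nhds 0) := by
      have := ((h1.add (((h2.const_mul 2).add h1).mul_const (1 + Mσ))))
      simpa using this
    refine this.congr (fun k => by rw [hf]; ring)
  obtain ⟨k₀, hk₀⟩ := (Filter.tendsto_atTop'.mp hf0 (Set.Iio (1/2))
    (Iio_mem_nhds (by norm_num)))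
  have hfhalf : ∀ n, n ≥ k₀ → f (2 ^ n * N) ≤ 1 / 2 := by
    intro n hn
    have h2n : k₀ ≤ 2 ^ n * N := by
      calc k₀ ≤ n := hn
        _ ≤ 2 ^ n := (Nat.lt_two_pow_self).le
        _ ≤ 2 ^ n * N := Nat.le_mul_of_pos_right _ hN
    exact (hk₀ _ h2n).le
  -- R (k₀ + j) ≤ R k₀ * (1/2)^j
  have hdecay : ∀ j, R (k₀ + j) ≤ R k₀ * (1 / 2) ^ j := by
    intro j
    induction j with
    | zero => simp
    | succ j ih =>
      rw [show k₀ + (j + 1) = (k₀ + j) + 1 from rfl, hRrec]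
      calc f (2 ^ (k₀ + j) * N) * R (k₀ + j) ≤ (1/2) * (R k₀ * (1/2) ^ j) := by
            apply mul_le_mul (hfhalf _ (by omega)) ih (hRnn _)
            norm_num
        _ = R k₀ * (1/2) ^ (j + 1) := by ring
  have hRk : (0:ℝ) < R k₀ + 1 := by linarith [hRnn k₀]
  obtain ⟨j, hj⟩ := exists_pow_lt_of_lt_one
    (div_pos hε hRk) (show (1:ℝ)/2 < 1 by norm_num)
  refine ⟨k₀ + j, lt_of_le_of_lt (hdecay j) ?_⟩
  have h1 : R k₀ * (1/2)^j ≤ (R k₀ + 1) * (1/2)^j := by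
    apply mul_le_mul_of_nonneg_right (by linarith [hRnn k₀]) (by positivity)
  have h2 : (R k₀ + 1) * (1/2)^j < (R k₀ + 1) * (ε / (R k₀ + 1)) := by
    exact mul_lt_mul_of_pos_left hj hRk
  have h3 : (R k₀ + 1) * (ε / (R k₀ + 1)) = ε := by
    rw [mul_comm, div_mul_cancel₀ ε hRk.ne']
  linarith

/-- Let `ψ` be holomorphic on the open unit disk `D` with `ψ(0) = 0` and `ψ'(0) = 1`.  Then
the linear span of the functions `{ψ(z^k)/z^N : k ≥ N}` (more precisely, of their holomorphic
extensions across `0`) is dense in the space of holomorphic functions on `D` for the topology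
of uniform convergence on compact sets. -/
theorem span_psi_pow_div_dense (ψ : ℂ → ℂ)
    (hψ : DifferentiableOn ℂ ψ (Metric.ball (0 : ℂ) 1))
    (h0 : ψ 0 = 0) (h1 : deriv ψ 0 = 1) (N : ℕ) (hN : 1 ≤ N) :
    ∀ g : ℂ → ℂ, DifferentiableOn ℂ g (Metric.ball (0 : ℂ) 1) →
      ∀ K : Set ℂ, IsCompact K → K ⊆ Metric.ball (0 : ℂ) 1 →
        ∀ ε : ℝ, 0 < ε →
          ∃ (s : Finset ℕ) (c : ℕ → ℂ) (h : ℂ → ℂ),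
            (∀ k ∈ s, N ≤ k) ∧
            DifferentiableOn ℂ h (Metric.ball (0 : ℂ) 1) ∧
            (∀ z ∈ Metric.ball (0 : ℂ) 1, z ≠ 0 →
              h z = ∑ k ∈ s, c k * (ψ (z ^ k) / z ^ N)) ∧
            ∀ z ∈ K, ‖g z - h z‖ < ε := by
  intro g hg K hK hKsub ε hε
  set σ : ℂ → ℂ := dslope (dslope ψ 0) 0 with hσdef
  have hσd : DifferentiableOn ℂ σ (ball (0:ℂ) 1) := by
    apply (Complex.differentiableOn_dslope (isOpen_ball.mem_nhds (by simp))).mpr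
    exact (Complex.differentiableOn_dslope (isOpen_ball.mem_nhds (by simp))).mpr hψ
  have hφ0 : dslope ψ 0 0 = 1 := by rw [dslope_same]; exact h1
  have hσid : ∀ w : ℂ, ψ w = w + w ^ 2 * σ w := by
    intro w
    have h3 := sub_smul_dslope ψ 0 w
    simp only [sub_zero, smul_eq_mul, h0] at h3
    have h2 := sub_smul_dslope (dslope ψ 0) 0 w
    simp only [sub_zero, smul_eq_mul, hφ0] at h2
    rw [hσdef] at *
    linear_combination -h3 - w * h2
  -- choice of radii
  have hrex : ∃ r : ℝ, 1/2 ≤ r ∧ r < 1 ∧ K ⊆ closedBall (0:ℂ) r := by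
    rcases K.eq_empty_or_nonempty with hKe | hKne
    · exact ⟨1/2, le_rfl, by norm_num, by simp [hKe]⟩
    · obtain ⟨z₀, hz₀K, hz₀max⟩ := hK.exists_isMaxOn hKne continuous_norm.continuousOn
      refine ⟨max ‖z₀‖ (1/2), le_max_right _ _, ?_, ?_⟩
      · exact max_lt (mem_ball_zero_iff.mp (hKsub hz₀K)) (by norm_num)
      · intro z hzK
        rw [mem_closedBall_zero_iff]
        exact le_trans (hz₀max hzK) (le_max_left _ _)
  obtain ⟨r, hr2, hr1, hKr⟩ := hrex
  have hrpos : 0 < r := by linarith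
  set ρ : ℝ := (r + 1) / 2 with hρdef
  have hρ0 : 0 < ρ := by rw [hρdef]; linarith
  have hρ1 : ρ < 1 := by rw [hρdef]; linarith
  have hrρ : r < ρ := by rw [hρdef]; linarith
  -- bounds
  have hσc : ContinuousOn σ (closedBall (0:ℂ) ρ) :=
    hσd.continuousOn.mono (closedBall_subset_ball hρ1)
  obtain ⟨Mσ', hMσ'⟩ := (isCompact_closedBall (0:ℂ) ρ).exists_bound_of_continuousOn hσc
  set Mσ : ℝ := max Mσ' 0 with hMσdef
  have hMσ : ∀ z ∈ closedBall (0:ℂ) ρ, ‖σ z‖ ≤ Mσ :=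
    fun z hz => (hMσ' z hz).trans (le_max_left _ _)
  have hMσ0 : 0 ≤ Mσ := le_max_right _ _
  set G0 : ℂ → ℂ := fun z => z ^ N * g z with hG0def
  have hG0 : DifferentiableOn ℂ G0 (ball (0:ℂ) 1) :=
    ((differentiable_pow N).differentiableOn).mul hg
  have hG0c : ContinuousOn G0 (closedBall (0:ℂ) ρ) := by
    apply ContinuousOn.mul (continuous_pow N).continuousOn
    exact hg.continuousOn.mono (closedBall_subset_ball hρ1)
  obtain ⟨A0', hA0'⟩ := (isCompact_closedBall (0:ℂ) ρ).exists_bound_of_continuousOn hG0c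
  set A0 : ℝ := max A0' 0 with hA0def
  have hA0 : ∀ z ∈ closedBall (0:ℂ) ρ, ‖G0 z‖ ≤ A0 :=
    fun z hz => (hA0' z hz).trans (le_max_left _ _)
  have hA00 : 0 ≤ A0 := le_max_right _ _
  -- choose n
  have hθ0 : 0 ≤ r / ρ := by positivity
  have hθ1 : r / ρ < 1 := (div_lt_one hρ0).mpr hrρ
  have hεr : 0 < ε * r ^ N := by positivity
  obtain ⟨n, hn⟩ := exists_good_n Mσ A0 hMσ0 hA00 hN hθ0 hθ1 hεr
  obtain ⟨c, G, u, hG, hu, hrep, hform, hA⟩ :=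
    iterate_lemma hρ0 hρ1 hψ hσd hσid hMσ hN hG0 hg (fun z _ => rfl) hA0 n
  set P : ℕ := 2 ^ n * N with hPdef
  have hNP : N ≤ P := Nat.le_mul_of_pos_left N (pow_pos (by norm_num) n)
  have hub : ∀ z ∈ closedBall (0:ℂ) ρ, ‖u z‖ ≤ boundSeq Mσ A0 N n / ρ ^ P :=
    factor_bound hρ0 hρ1 hu hrep hA
  refine ⟨Finset.Icc N P, c, fun z => g z - z ^ (P - N) * u z, ?_, ?_, ?_, ?_⟩
  · intro k hk; exact (Finset.mem_Icc.mp hk).1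
  · exact hg.sub (((differentiable_pow (P - N)).differentiableOn).mul hu)
  · intro z hz hz0
    have hzN : (z:ℂ) ^ N ≠ 0 := pow_ne_zero _ hz0
    have key : (g z - z ^ (P - N) * u z) * z ^ N
        = (∑ k ∈ Finset.Icc N P, c k * (ψ (z ^ k) / z ^ N)) * z ^ N := by
      rw [Finset.sum_mul]
      have e : ∀ k ∈ Finset.Icc N P, c k * (ψ (z ^ k) / z ^ N) * z ^ N = c k * ψ (z ^ k) :=
        fun k _ => by field_simp
      rw [Finset.sum_congr rfl e]
      have hPN : z ^ (P - N) * z ^ N = z ^ P := by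
        rw [← pow_add]; congr 1; omega
      calc (g z - z ^ (P - N) * u z) * z ^ N = z ^ N * g z - z ^ (P - N) * z ^ N * u z := by
            ring
        _ = G0 z - G z := by rw [hPN, hrep z hz, hG0def]
        _ = ∑ k ∈ Finset.Icc N P, c k * ψ (z ^ k) := by rw [hform z hz]; ring
    exact mul_right_cancel₀ hzN key
  · intro z hzK
    have hzr : ‖z‖ ≤ r := mem_closedBall_zero_iff.mp (hKr hzK)
    have hzρ : z ∈ closedBall (0:ℂ) ρ := mem_closedBall_zero_iff.mpr (hzr.trans hrρ.le)
    have hq : g z - (g z - z ^ (P - N) * u z) = z ^ (P - N) * u z := by ring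
    rw [hq, norm_mul, norm_pow]
    have hB0 : 0 ≤ boundSeq Mσ A0 N n / ρ ^ P := by
      have := (norm_nonneg (u z)).trans (hub z hzρ)
      exact this
    calc ‖z‖ ^ (P - N) * ‖u z‖ ≤ r ^ (P - N) * (boundSeq Mσ A0 N n / ρ ^ P) :=
          mul_le_mul (pow_le_pow_left₀ (norm_nonneg z) hzr _) (hub z hzρ) (norm_nonneg _)
            (pow_nonneg hrpos.le _)
      _ < ε := by
          have hrN : (0:ℝ) < r ^ N := pow_pos hrpos _
          have hρP : (0:ℝ) < ρ ^ P := pow_pos hρ0 _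
          have he1 : r ^ (P - N) = r ^ P / r ^ N := by
            rw [eq_div_iff hrN.ne', ← pow_add]; congr 1; omega
          rw [div_pow] at hn
          rw [he1]
          have he2 : r ^ P / r ^ N * (boundSeq Mσ A0 N n / ρ ^ P)
              = boundSeq Mσ A0 N n * (r ^ P / ρ ^ P) / r ^ N := by
            field_simp
          rw [he2, div_lt_iff₀ hrN]
          exact hn
end
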